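/- Let W be a complex vector space, σ a conjugate-linear involution on W, q, m, r, n ∈ ℕ, and ζ ∈ ℝ with 0 < ζ ≤ 1. Let x : Fin q → W with σ(x k) = x k for all k and l : Fin m → W. Let L := Submodule.span ℂ (Set.range x ∪ Set.range l), and assume Submodule.span ℂ (Set.range x) = L ⊓ Submodule.map σ L, finrank_ℂ(L ⊓ Submodule.map σ L) = r, and finrank_ℂ L = n + r. Fix K₀ : Fin r → Fin q and J₀ : Fin n → Fin m, and let T₀ : Fin (r + n) → W be the concatenated tuple (x ∘ K₀, l ∘ J₀). Assume: (a) T₀ is ℂ-linearly independent; and (b) for every r₁, n₁ with r₁ + n₁ = r + n, every K : Fin r₁ → Fin q, every J : Fin n₁ → Fin m, and every alternating ℂ-multilinear map φ : AlternatingMap ℂ W ℂ (Fin (r+n)), one has ‖φ(x ∘ K, l ∘ J)‖ ≤ ζ⁻¹ · ‖φ(T₀)‖ (applying φ to the concatenated tuple of length r₁ + n₁ = r + n). Then: (1) the real tuple B₀ : Fin (r + 2n) → W given by concatenating x ∘ K₀, (fun j => (2:ℂ) • Re(l (J₀ j))), and (fun j => (2:ℂ) • Im(l (J₀ j))) is linearly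 independent over ℝ (W regarded as a real vector space by restriction of scalars); and (2) letting w : Fin (q + 2m) → W be the concatenation of x, (fun j => (2:ℂ) • Re(l j)), and (fun j => (2:ℂ) • Im(l j)), for every P : Fin (r + 2n) → Fin (q + 2m) and every alternating ℝ-multilinear map ψ : AlternatingMap ℝ W ℝ (Fin (r+2n)) one has |ψ(w ∘ P)| ≤ (2 · ζ⁻¹ · Real.sqrt (r + 2n))^(r + 2n) · |ψ(B₀)|. -/

import Mathlib

open Submodule

/-- The real part of a vector with respect to a conjugate-linear involution `σ`:
`Re v := (1/2 : ℂ) • (v + σ v)`. -/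
noncomputable def conjRe {W : Type*} [AddCommGroup W] [Module ℂ W]
    (σ : W →ₛₗ[starRingEnd ℂ] W) (v : W) : W :=
  ((1 : ℂ) / 2) • (v + σ v)

/-- The imaginary part of a vector with respect to a conjugate-linear involution `σ`:
`Im v := (-I/2) • (v - σ v)`. -/
noncomputable def conjIm {W : Type*} [AddCommGroup W] [Module ℂ W]
    (σ : W →ₛₗ[starRingEnd ℂ] W) (v : W) : W :=
  (-(Complex.I) / 2) • (v - σ v)

section Aux

lemma fin_append_eval_lt {α : Sort*} {m n : ℕ} (a : Fin m → α) (b : Fin n → α)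
    (i : Fin (m + n)) (h : (i : ℕ) < m) : Fin.append a b i = a ⟨(i : ℕ), h⟩ := by
  have e : i = Fin.castAdd n ⟨(i : ℕ), h⟩ := by apply Fin.ext; rfl
  conv_lhs => rw [e]
  rw [Fin.append_left]

lemma fin_append_eval_ge {α : Sort*} {m n : ℕ} (a : Fin m → α) (b : Fin n → α)
    (i : Fin (m + n)) (h : m ≤ (i : ℕ)) : Fin.append a b i = b ⟨(i : ℕ) - m, by omega⟩ := by
  have e : i = Fin.natAdd m ⟨(i : ℕ) - m, by omega⟩ := by apply Fin.ext; simp; omega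
  conv_lhs => rw [e]
  rw [Fin.append_right]

lemma append_update_left {α : Sort*} {m n : ℕ} (f : Fin m → α) (g : Fin n → α)
    (s : Fin m) (z : α) :
    Fin.append (Function.update f s z) g = Function.update (Fin.append f g) (Fin.castAdd n s) z := by
  funext i
  have hs := s.isLt
  by_cases hi : (i : ℕ) < m
  · rw [fin_append_eval_lt _ _ _ hi, Function.update_apply, Function.update_apply]
    by_cases he : (i : ℕ) = (s : ℕ)
    · rw [if_pos (by apply Fin.ext; simpa), if_pos (by apply Fin.ext; simpa)]
    · rw [if_neg (by simp [Fin.ext_iff]; omega), if_neg (by simp [Fin.ext_iff]; omega),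
        fin_append_eval_lt _ _ _ hi]
  · rw [fin_append_eval_ge _ _ _ (Nat.le_of_not_lt hi), Function.update_apply,
      if_neg (by simp [Fin.ext_iff]; omega), fin_append_eval_ge _ _ _ (Nat.le_of_not_lt hi)]

lemma append_update_right {α : Sort*} {m n : ℕ} (f : Fin m → α) (g : Fin n → α)
    (t : Fin n) (z : α) :
    Fin.append f (Function.update g t z) = Function.update (Fin.append f g) (Fin.natAdd m t) z := by
  funext i
  have ht := t.isLt
  by_cases hi : (i : ℕ) < m
  · rw [fin_append_eval_lt _ _ _ hi, Function.update_apply,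
      if_neg (by simp [Fin.ext_iff]; omega), fin_append_eval_lt _ _ _ hi]
  · rw [fin_append_eval_ge _ _ _ (Nat.le_of_not_lt hi), Function.update_apply, Function.update_apply]
    by_cases he : (i : ℕ) - m = (t : ℕ)
    · rw [if_pos (by apply Fin.ext; simpa), if_pos (by apply Fin.ext; simp; omega)]
    · rw [if_neg (by simp [Fin.ext_iff]; omega), if_neg (by simp [Fin.ext_iff]; omega),
        fin_append_eval_ge _ _ _ (Nat.le_of_not_lt hi)]

lemma val_succAbove' {r' : ℕ} (s : Fin (r' + 1)) (j : Fin r') :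
    ((s.succAbove j : Fin (r' + 1)) : ℕ) = if (j : ℕ) < (s : ℕ) then (j : ℕ) else (j : ℕ) + 1 := by
  by_cases hc : (j : ℕ) < (s : ℕ)
  · rw [Fin.succAbove_of_castSucc_lt _ _ (by simpa [Fin.lt_def] using hc), if_pos hc]
    simp
  · rw [Fin.succAbove_of_le_castSucc _ _ (by simpa [Fin.le_def] using Nat.le_of_not_lt hc),
      if_neg hc]
    simp

/-- The permutation that moves position `r'` to position `s`, shifting `[s, r')` up by one. -/
noncomputable def movePerm (r' n : ℕ) (s : Fin (r' + 1)) : Equiv.Perm (Fin (r' + 1 + n)) :=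
  Equiv.ofBijective
    (fun i => if h1 : (i : ℕ) < (s : ℕ) then i
      else if h2 : (i : ℕ) < r' then ⟨(i : ℕ) + 1, by omega⟩
      else if h3 : (i : ℕ) = r' then ⟨(s : ℕ), by omega⟩ else i)
    (Finite.injective_iff_bijective.mp (by
      intro a b hab
      have hs := s.isLt
      apply Fin.ext
      dsimp only at hab
      split_ifs at hab <;> simp only [Fin.ext_iff, Fin.val_mk] at hab ⊢ <;> omega))

lemma movePerm_eval {W : Type*} (r' n : ℕ) (s : Fin (r' + 1)) (xv : Fin (r' + 1) → W)
    (lv : Fin n → W) (z : W) (h : r' + (n + 1) = r' + 1 + n) :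
    (fun i => Fin.append (xv ∘ s.succAbove) (Fin.cons z lv) (Fin.cast h.symm i)) =
      (Function.update (Fin.append xv lv) (Fin.castAdd n s) z) ∘ (movePerm r' n s) := by
  funext i
  have hs := s.isLt
  have hi := i.isLt
  simp only [Function.comp_apply, movePerm, Equiv.ofBijective_apply]
  by_cases h1 : (i : ℕ) < (s : ℕ)
  · rw [dif_pos h1]
    rw [fin_append_eval_lt _ _ _ (show ((Fin.cast h.symm i : Fin (r' + (n+1))) : ℕ) < r' by
      simp; omega)]
    rw [Function.update_apply, if_neg (by simp [Fin.ext_iff]; omega)]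
    rw [fin_append_eval_lt _ _ _ (show (i : ℕ) < r' + 1 by omega)]
    simp only [Function.comp_apply]
    congr 1
    apply Fin.ext
    rw [val_succAbove']
    simp only [Fin.val_mk, Fin.coe_cast]
    rw [if_pos h1]
  · rw [dif_neg h1]
    by_cases h2 : (i : ℕ) < r'
    · rw [dif_pos h2]
      rw [fin_append_eval_lt _ _ _ (show ((Fin.cast h.symm i : Fin (r' + (n+1))) : ℕ) < r' by
        simpa using h2)]
      rw [Function.update_apply, if_neg (by simp [Fin.ext_iff]; omega)]
      rw [fin_append_eval_lt _ _ _ (show ((⟨(i:ℕ)+1, by omega⟩ : Fin (r'+1+n)) : ℕ) < r' + 1 by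
        simp; omega)]
      simp only [Function.comp_apply]
      congr 1
      apply Fin.ext
      rw [val_succAbove']
      simp only [Fin.val_mk, Fin.coe_cast]
      rw [if_neg h1]
    · rw [dif_neg h2]
      by_cases h3 : (i : ℕ) = r'
      · rw [dif_pos h3]
        rw [fin_append_eval_ge _ _ _ (show r' ≤ ((Fin.cast h.symm i : Fin (r' + (n+1))) : ℕ) by
          simp; omega)]
        have e0 : (⟨((Fin.cast h.symm i : Fin (r' + (n+1))) : ℕ) - r', by omega⟩ : Fin (n+1)) = 0 := by
          apply Fin.ext; simp; omega
        rw [e0, Fin.cons_zero]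
        have e2 : (⟨(s:ℕ), by omega⟩ : Fin (r'+1+n)) = Fin.castAdd n s := by
          apply Fin.ext; simp
        rw [e2, Function.update_self]
      · rw [dif_neg h3]
        have hgt : r' < (i : ℕ) := by omega
        rw [fin_append_eval_ge _ _ _ (show r' ≤ ((Fin.cast h.symm i : Fin (r' + (n+1))) : ℕ) by
          simp; omega)]
        have e3 : (⟨((Fin.cast h.symm i : Fin (r' + (n+1))) : ℕ) - r', by omega⟩ : Fin (n+1)) =
            Fin.succ ⟨(i:ℕ) - r' - 1, by omega⟩ := by
          apply Fin.ext; simp; omega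
        rw [e3, Fin.cons_succ]
        rw [Function.update_apply, if_neg (by simp [Fin.ext_iff]; omega)]
        rw [fin_append_eval_ge _ _ _ (show r' + 1 ≤ (i : ℕ) by omega)]
        congr 1

lemma my_hadamard {N : ℕ} (A : Matrix (Fin N) (Fin N) ℝ) (c : ℝ) (hc : 0 ≤ c)
    (h : ∀ i j, |A i j| ≤ c) : |A.det| ≤ (Real.sqrt N * c) ^ N := by
  classical
  set E := EuclideanSpace ℝ (Fin N)
  haveI : Fact (Module.finrank ℝ E = N) := ⟨finrank_euclideanSpace_fin⟩
  set b : OrthonormalBasis (Fin N) ℝ E := EuclideanSpace.basisFun (Fin N) ℝ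
  set o : Orientation ℝ E (Fin N) := b.toBasis.orientation
  have hvol : o.volumeForm = b.toBasis.det := o.volumeForm_robust b rfl
  set v : Fin N → E := fun i => (WithLp.equiv 2 (Fin N → ℝ)).symm (fun j => A j i)
  have hdet : b.toBasis.det v = A.det := by
    rw [Module.Basis.det_apply]
    have hM : b.toBasis.toMatrix v = A := by
      ext i j
      simp only [Module.Basis.toMatrix_apply]; rfl
    rw [hM]
  have hb := o.abs_volumeForm_apply_le v
  rw [hvol, hdet] at hb
  refine hb.trans ?_
  have hnorm : ∀ i, ‖v i‖ ≤ Real.sqrt N * c := by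
    intro i
    rw [EuclideanSpace.norm_eq]
    have : ∑ j : Fin N, ‖v i j‖ ^ 2 ≤ ∑ _j : Fin N, c ^ 2 := by
      refine Finset.sum_le_sum fun j _ => ?_
      have : ‖v i j‖ ≤ c := by simpa [v, Real.norm_eq_abs] using h j i
      exact pow_le_pow_left₀ (norm_nonneg _) this 2
    calc Real.sqrt (∑ j : Fin N, ‖v i j‖ ^ 2) ≤ Real.sqrt (∑ _j : Fin N, c ^ 2) :=
          Real.sqrt_le_sqrt this
      _ = Real.sqrt (N * c ^ 2) := by simp [mul_comm]
      _ = Real.sqrt N * c := by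
          rw [Real.sqrt_mul (Nat.cast_nonneg N), Real.sqrt_sq hc]
  calc ∏ i : Fin N, ‖v i‖ ≤ ∏ _i : Fin N, (Real.sqrt N * c) :=
        Finset.prod_le_prod (fun i _ => norm_nonneg _) (fun i _ => hnorm i)
    _ = (Real.sqrt N * c) ^ N := by simp

variable {W : Type*} [AddCommGroup W] [Module ℂ W]

lemma two_conjRe (σ : W →ₛₗ[starRingEnd ℂ] W) (v : W) :
    (2 : ℂ) • conjRe σ v = v + σ v := by
  rw [conjRe, smul_smul]
  norm_num

lemma two_conjIm (σ : W →ₛₗ[starRingEnd ℂ] W) (v : W) :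
    (2 : ℂ) • conjIm σ v = (-Complex.I) • (v - σ v) := by
  rw [conjIm, smul_smul]
  congr 1
  ring

lemma combineRI (p q : ℂ) (v u : W) :
    p • (v + u) + q • ((-Complex.I) • (v - u)) =
      (p + q * (-Complex.I)) • v + (p - q * (-Complex.I)) • u := by
  rw [smul_smul, smul_add, smul_sub, add_smul, sub_smul]
  abel

lemma termX (a : ℂ) (v : W) :
    a • v + (starRingEnd ℂ a) • v = ((2 * a.re : ℝ) : ℂ) • v := by
  rw [← add_smul]
  congr 1
  apply Complex.ext <;> simp <;> ring

lemma termXIm (a : ℂ) (v : W) :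
    (-Complex.I) • (a • v - (starRingEnd ℂ a) • v) = ((2 * a.im : ℝ) : ℂ) • v := by
  rw [← sub_smul, smul_smul]
  congr 1
  apply Complex.ext <;> simp <;> ring

lemma termRe (b : ℂ) (v u : W) :
    b • v + (starRingEnd ℂ b) • u =
      ((b.re : ℝ) : ℂ) • (v + u) + ((-b.im : ℝ) : ℂ) • ((-Complex.I) • (v - u)) := by
  rw [combineRI,
    show ((b.re : ℝ) : ℂ) + ((-b.im : ℝ) : ℂ) * (-Complex.I) = b by apply Complex.ext <;> simp,
    show ((b.re : ℝ) : ℂ) - ((-b.im : ℝ) : ℂ) * (-Complex.I) = starRingEnd ℂ b by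
      apply Complex.ext <;> simp]

lemma termIm (b : ℂ) (v u : W) :
    (-Complex.I) • (b • v - (starRingEnd ℂ b) • u) =
      ((b.im : ℝ) : ℂ) • (v + u) + ((b.re : ℝ) : ℂ) • ((-Complex.I) • (v - u)) := by
  rw [combineRI,
    show ((b.im : ℝ) : ℂ) + ((b.re : ℝ) : ℂ) * (-Complex.I) = -Complex.I * b by
      apply Complex.ext <;> simp,
    show ((b.im : ℝ) : ℂ) - ((b.re : ℝ) : ℂ) * (-Complex.I) = -(-Complex.I * (starRingEnd ℂ b)) by
      apply Complex.ext <;> simp]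
  rw [smul_sub, smul_smul, smul_smul, sub_eq_add_neg, ← neg_smul]

lemma real_smul_eq {W : Type*} [AddCommGroup W] [Module ℂ W] (g : ℝ) (v : W) :
    g • v = ((g : ℂ)) • v := by
  rw [← algebraMap_smul ℂ g v, Complex.coe_algebraMap]

lemma sum_split2 {M : Type*} [AddCommMonoid M] {r n : ℕ} (f : Fin (r + n) → M) :
    ∑ p, f p = ∑ s : Fin r, f (Fin.castAdd n s) + ∑ t : Fin n, f (Fin.natAdd r t) :=
  Fin.sum_univ_add f

lemma sum_split3 {M : Type*} [AddCommMonoid M] {r n : ℕ} (f : Fin (r + n + n) → M) :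
    ∑ p, f p = ∑ s : Fin r, f (Fin.castAdd n (Fin.castAdd n s)) +
      ∑ t : Fin n, f (Fin.castAdd n (Fin.natAdd r t)) + ∑ t : Fin n, f (Fin.natAdd (r + n) t) := by
  rw [Fin.sum_univ_add f, Fin.sum_univ_add (fun i : Fin (r + n) => f (Fin.castAdd n i))]

end Aux

set_option maxHeartbeats 2000000 in
/-- Proposition on quotients of wedge products, complex ⇒ real direction.
If the concatenated tuple `T₀ = (x ∘ K₀, l ∘ J₀)` is ℂ-linearly independent and every
alternating ℂ-multilinear form satisfies the bound `‖φ(x∘K, l∘J)‖ ≤ ζ⁻¹ ‖φ(T₀)‖` for all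
concatenations of total length `r + n`, then the real tuple
`B₀ = (x∘K₀, 2 Re(l∘J₀), 2 Im(l∘J₀))` is ℝ-linearly independent and every alternating
ℝ-multilinear form `ψ` satisfies
`|ψ(w ∘ P)| ≤ (2 ζ⁻¹ √(r+2n))^(r+2n) |ψ(B₀)|` for all `P`. -/
theorem wedge_quotient_complex_to_real
    (W : Type*) [AddCommGroup W] [Module ℂ W]
    (σ : W →ₛₗ[starRingEnd ℂ] W) (hinv : ∀ w : W, σ (σ w) = w)
    (q m r n : ℕ) (ζ : ℝ) (hζ0 : 0 < ζ) (hζ1 : ζ ≤ 1)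
    (x : Fin q → W) (hx : ∀ k, σ (x k) = x k) (l : Fin m → W)
    (L : Submodule ℂ W) (hL : L = Submodule.span ℂ (Set.range x ∪ Set.range l))
    (hX : Submodule.span ℂ (Set.range x) = L ⊓ Submodule.map σ L)
    (hr : Module.finrank ℂ ↥(L ⊓ Submodule.map σ L) = r)
    (hnr : Module.finrank ℂ ↥L = n + r)
    (K₀ : Fin r → Fin q) (J₀ : Fin n → Fin m)
    (T₀ : Fin (r + n) → W) (hT₀ : T₀ = Fin.append (x ∘ K₀) (l ∘ J₀))
    (ha : LinearIndependent ℂ T₀)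
    (hb : ∀ (r₁ n₁ : ℕ) (h : r₁ + n₁ = r + n) (K : Fin r₁ → Fin q) (J : Fin n₁ → Fin m)
      (φ : W [⋀^Fin (r + n)]→ₗ[ℂ] ℂ),
      ‖φ (fun i => Fin.append (x ∘ K) (l ∘ J) (Fin.cast h.symm i))‖ ≤ ζ⁻¹ * ‖φ T₀‖)
    (B₀ : Fin (r + n + n) → W)
    (hB₀ : B₀ = Fin.append
      (Fin.append (x ∘ K₀) (fun j => (2 : ℂ) • conjRe σ (l (J₀ j))))
      (fun j => (2 : ℂ) • conjIm σ (l (J₀ j))))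
    (w : Fin (q + m + m) → W)
    (hw : w = Fin.append
      (Fin.append x (fun j => (2 : ℂ) • conjRe σ (l j)))
      (fun j => (2 : ℂ) • conjIm σ (l j))) :
    LinearIndependent ℝ B₀ ∧
      ∀ (P : Fin (r + n + n) → Fin (q + m + m)) (ψ : W [⋀^Fin (r + n + n)]→ₗ[ℝ] ℝ),
        |ψ (w ∘ P)| ≤
          (2 * ζ⁻¹ * Real.sqrt ((r + n + n : ℕ) : ℝ)) ^ (r + n + n) * |ψ B₀| := by
  classical
  have hζinv : (0:ℝ) ≤ ζ⁻¹ := by positivity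
  have hζle : ζ⁻¹ ≤ 2 * ζ⁻¹ := by linarith
  have hxL : ∀ k, x k ∈ L := fun k => by rw [hL]; exact subset_span (Or.inl ⟨k, rfl⟩)
  have hlL : ∀ j, l j ∈ L := fun j => by rw [hL]; exact subset_span (Or.inr ⟨j, rfl⟩)
  haveI hLfin : FiniteDimensional ℂ L := by
    rw [hL]
    exact Module.Finite.span_of_finite ℂ ((Set.finite_range x).union (Set.finite_range l))
  have hT1 : ∀ s : Fin r, T₀ (Fin.castAdd n s) = x (K₀ s) := fun s => by
    rw [hT₀, Fin.append_left]; rfl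
  have hT2 : ∀ t : Fin n, T₀ (Fin.natAdd r t) = l (J₀ t) := fun t => by
    rw [hT₀, Fin.append_right]; rfl
  have hTL : ∀ i, T₀ i ∈ L := by
    intro i
    induction i using Fin.addCases with
    | left s => rw [hT1]; exact hxL _
    | right t => rw [hT2]; exact hlL _
  have hspanT : span ℂ (Set.range T₀) = L := by
    refine eq_of_le_of_finrank_le (span_le.mpr ?_) ?_
    · rintro _ ⟨i, rfl⟩; exact hTL i
    · rw [hnr, finrank_span_eq_card ha, Fintype.card_fin]; omega
  have haK : LinearIndependent ℂ (x ∘ K₀) := by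
    have he : x ∘ K₀ = T₀ ∘ Fin.castAdd n := by
      funext s; rw [Function.comp_apply, Function.comp_apply, hT1 s]
    rw [he]
    exact ha.comp _ (Fin.castAdd_injective _ _)
  haveI : FiniteDimensional ℂ (span ℂ (Set.range x)) :=
    Module.Finite.span_of_finite ℂ (Set.finite_range x)
  have hspanX : span ℂ (Set.range (x ∘ K₀)) = span ℂ (Set.range x) := by
    refine eq_of_le_of_finrank_le (span_mono ?_) ?_
    · rintro _ ⟨s, rfl⟩; exact ⟨K₀ s, rfl⟩
    · have h1 : Module.finrank ℂ (span ℂ (Set.range x)) = r := by rw [hX]; exact hr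
      rw [h1, finrank_span_eq_card haK, Fintype.card_fin]
  have hσx : ∀ v ∈ span ℂ (Set.range x), σ v ∈ span ℂ (Set.range x) := by
    intro v hv
    have h1 : σ v ∈ Submodule.map σ (span ℂ (Set.range x)) := Submodule.mem_map_of_mem hv
    rw [Submodule.map_span] at h1
    have he : ⇑σ '' Set.range x = Set.range x := by
      rw [← Set.range_comp, show ⇑σ ∘ x = x from funext hx]
    rwa [he] at h1
  -- a nonvanishing alternating form on `T₀`
  obtain ⟨Q, hQ⟩ := Submodule.exists_isCompl (span ℂ (Set.range T₀))
  set prj : W →ₗ[ℂ] span ℂ (Set.range T₀) :=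
    (span ℂ (Set.range T₀)).linearProjOfIsCompl Q hQ with hprj
  set bT : Module.Basis (Fin (r + n)) ℂ (span ℂ (Set.range T₀)) := Module.Basis.span ha with hbT
  set φ₀ : W [⋀^Fin (r + n)]→ₗ[ℂ] ℂ := bT.det.compLinearMap prj with hφ₀def
  have hφ₀T : φ₀ T₀ = 1 := by
    have h1 : ⇑prj ∘ T₀ = ⇑bT := by
      funext i
      have h2 : T₀ i = ↑(bT i) := (congrArg Subtype.val (Module.Basis.span_apply ha i)).symm
      rw [Function.comp_apply, h2]
      exact Submodule.linearProjOfIsCompl_apply_left hQ (bT i)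
    show bT.det (⇑prj ∘ T₀) = 1
    rw [h1, Module.Basis.det_self]
  have hcoeff : ∀ (f : W [⋀^Fin (r + n)]→ₗ[ℂ] ℂ) (c : Fin (r + n) → ℂ) (p : Fin (r + n)),
      f (Function.update T₀ p (∑ i, c i • T₀ i)) = c p * f T₀ := by
    intro f c p
    rw [AlternatingMap.map_update_sum]
    rw [Finset.sum_eq_single p]
    · rw [AlternatingMap.map_update_smul, Function.update_eq_self, smul_eq_mul]
    · intro i _ hip
      rw [AlternatingMap.map_update_smul, AlternatingMap.map_update_self f T₀ hip.symm, smul_zero]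
    · intro hp; exact absurd (Finset.mem_univ p) hp
  have hcast : ∀ (i : Fin (r + n)), Fin.cast (rfl : r + n = r + n).symm i = i := fun i => rfl
  -- coefficient bounds
  have hXcoef : ∀ (k : Fin q) (c : Fin (r + n) → ℂ), (∑ i, c i • T₀ i = x k) →
      ∀ s : Fin r, ‖c (Fin.castAdd n s)‖ ≤ ζ⁻¹ := by
    intro k c hc s
    have hb' := hb r n rfl (Function.update K₀ s k) J₀ φ₀
    have he : (fun i => Fin.append (x ∘ Function.update K₀ s k) (l ∘ J₀)
        (Fin.cast (rfl : r + n = r + n).symm i)) =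
        Function.update T₀ (Fin.castAdd n s) (x k) := by
      funext i
      rw [hcast i]
      show Fin.append (x ∘ Function.update K₀ s k) (l ∘ J₀) i = _
      rw [Function.comp_update, append_update_left, ← hT₀]
    rw [he, ← hc, hcoeff, hφ₀T, mul_one] at hb'
    simpa using hb'
  have hJcoef : ∀ (j : Fin m) (c : Fin (r + n) → ℂ), (∑ i, c i • T₀ i = l j) →
      ∀ t : Fin n, ‖c (Fin.natAdd r t)‖ ≤ ζ⁻¹ := by
    intro j c hc t
    have hb' := hb r n rfl K₀ (Function.update J₀ t j) φ₀
    have he : (fun i => Fin.append (x ∘ K₀) (l ∘ Function.update J₀ t j)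
        (Fin.cast (rfl : r + n = r + n).symm i)) =
        Function.update T₀ (Fin.natAdd r t) (l j) := by
      funext i
      rw [hcast i]
      show Fin.append (x ∘ K₀) (l ∘ Function.update J₀ t j) i = _
      rw [Function.comp_update, append_update_right, ← hT₀]
    rw [he, ← hc, hcoeff, hφ₀T, mul_one] at hb'
    simpa using hb'
  have hAcoef : ∀ (j : Fin m) (c : Fin (r + n) → ℂ), (∑ i, c i • T₀ i = l j) →
      ∀ s : Fin r, ‖c (Fin.castAdd n s)‖ ≤ ζ⁻¹ := by
    intro j c hc s
    have hrpos : 0 < r := s.pos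
    obtain ⟨r', rfl⟩ : ∃ r', r = r' + 1 := ⟨r - 1, by omega⟩
    have h' : r' + (n + 1) = r' + 1 + n := by omega
    have hb' := hb r' (n + 1) h' (K₀ ∘ s.succAbove) (Fin.cons j J₀) φ₀
    have he : (fun i => Fin.append (x ∘ (K₀ ∘ s.succAbove)) (l ∘ Fin.cons j J₀)
        (Fin.cast h'.symm i)) =
        (Function.update T₀ (Fin.castAdd n s) (l j)) ∘ (movePerm r' n s) := by
      have e1 : x ∘ (K₀ ∘ s.succAbove) = (x ∘ K₀) ∘ s.succAbove := rfl
      have e2 : l ∘ Fin.cons j J₀ = Fin.cons (l j) (l ∘ J₀) := Fin.comp_cons l j J₀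
      rw [e1, e2, hT₀]
      exact movePerm_eval r' n s (x ∘ K₀) (l ∘ J₀) (l j) h'
    rw [he, AlternatingMap.map_perm] at hb'
    have hnp : ‖Equiv.Perm.sign (movePerm r' n s) •
        (φ₀ (Function.update T₀ (Fin.castAdd n s) (l j)))‖ =
        ‖φ₀ (Function.update T₀ (Fin.castAdd n s) (l j))‖ := by
      rcases Int.units_eq_one_or (Equiv.Perm.sign (movePerm r' n s)) with hsg | hsg <;>
        rw [hsg, Units.smul_def] <;> simp
    rw [hnp, ← hc, hcoeff, hφ₀T, mul_one] at hb'
    simpa using hb'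
  have hmemT : ∀ v, v ∈ L → ∃ c : Fin (r + n) → ℂ, ∑ i, c i • T₀ i = v := by
    intro v hv
    rw [← hspanT] at hv
    exact (mem_span_range_iff_exists_fun ℂ).mp hv
  -- joint complex independence of x∘K₀, l∘J₀, σ∘l∘J₀
  have hTrel : ∀ (e : Fin r → ℂ) (f : Fin n → ℂ),
      (∑ s, e s • x (K₀ s) + ∑ t, f t • l (J₀ t) = 0) →
      (∀ s, e s = 0) ∧ (∀ t, f t = 0) := by
    intro e f h0
    have hG : ∑ i, (Fin.append e f) i • T₀ i = 0 := by
      rw [sum_split2]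
      have e1 : ∑ s : Fin r, Fin.append e f (Fin.castAdd n s) • T₀ (Fin.castAdd n s) =
          ∑ s, e s • x (K₀ s) :=
        Finset.sum_congr rfl fun s _ => by rw [Fin.append_left, hT1]
      have e2 : ∑ t : Fin n, Fin.append e f (Fin.natAdd r t) • T₀ (Fin.natAdd r t) =
          ∑ t, f t • l (J₀ t) :=
        Finset.sum_congr rfl fun t _ => by rw [Fin.append_right, hT2]
      rw [e1, e2, h0]
    have hall := Fintype.linearIndependent_iff.mp ha (Fin.append e f) hG
    constructor
    · intro s; have := hall (Fin.castAdd n s); rwa [Fin.append_left] at this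
    · intro t; have := hall (Fin.natAdd r t); rwa [Fin.append_right] at this
  have hCind : ∀ (α : Fin r → ℂ) (u v : Fin n → ℂ),
      (∑ s, α s • x (K₀ s) + ∑ t, u t • l (J₀ t) + ∑ t, v t • σ (l (J₀ t)) = 0) →
      (∀ s, α s = 0) ∧ (∀ t, u t = 0) ∧ (∀ t, v t = 0) := by
    intro α u v hrel
    have hvmem : ∑ t, v t • σ (l (J₀ t)) ∈ span ℂ (Set.range x) := by
      rw [hX]
      refine Submodule.mem_inf.mpr ⟨?_, ?_⟩
      · have hEq : ∑ t, v t • σ (l (J₀ t)) =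
            -(∑ s, α s • x (K₀ s) + ∑ t, u t • l (J₀ t)) :=
          eq_neg_of_add_eq_zero_right hrel
        rw [hEq]
        exact neg_mem (add_mem (sum_mem fun s _ => smul_mem _ _ (hxL _))
          (sum_mem fun t _ => smul_mem _ _ (hlL _)))
      · exact sum_mem fun t _ => smul_mem _ _ (Submodule.mem_map_of_mem (hlL _))
    have hσv : σ (∑ t, v t • σ (l (J₀ t))) = ∑ t, (starRingEnd ℂ (v t)) • l (J₀ t) := by
      rw [map_sum]
      exact Finset.sum_congr rfl fun t _ => by rw [LinearMap.map_smulₛₗ, hinv]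
    have hvx : ∑ t, (starRingEnd ℂ (v t)) • l (J₀ t) ∈ span ℂ (Set.range (x ∘ K₀)) := by
      rw [hspanX, ← hσv]
      exact hσx _ hvmem
    obtain ⟨e, he⟩ := (mem_span_range_iff_exists_fun ℂ).mp hvx
    have h0 : ∑ s, e s • x (K₀ s) + ∑ t, (-(starRingEnd ℂ (v t))) • l (J₀ t) = 0 := by
      have he' : ∑ s, e s • x (K₀ s) = ∑ t, (starRingEnd ℂ (v t)) • l (J₀ t) := he
      simp only [neg_smul]
      rw [Finset.sum_neg_distrib, he']
      exact add_neg_cancel _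
    obtain ⟨he0, hv0'⟩ := hTrel e _ h0
    have hv0 : ∀ t, v t = 0 := by
      intro t
      have h1 : starRingEnd ℂ (v t) = 0 := by
        have := hv0' t; rwa [neg_eq_zero] at this
      have := congrArg (starRingEnd ℂ) h1
      simpa using this
    have hrel2 : ∑ s, α s • x (K₀ s) + ∑ t, u t • l (J₀ t) = 0 := by
      have hz : ∑ t, v t • σ (l (J₀ t)) = 0 :=
        Finset.sum_eq_zero fun t _ => by rw [hv0 t, zero_smul]
      rwa [hz, add_zero] at hrel
    obtain ⟨hα0, hu0⟩ := hTrel α u hrel2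
    exact ⟨hα0, hu0, hv0⟩
  -- expansion of σ (l j)
  have hσl : ∀ (j : Fin m) (a : Fin r → ℂ) (bb : Fin n → ℂ),
      l j = ∑ s, a s • x (K₀ s) + ∑ t, bb t • l (J₀ t) →
      σ (l j) = ∑ s, (starRingEnd ℂ (a s)) • x (K₀ s) +
        ∑ t, (starRingEnd ℂ (bb t)) • σ (l (J₀ t)) := by
    intro j a bb h
    rw [h, map_add, map_sum, map_sum]
    congr 1
    · exact Finset.sum_congr rfl fun s _ => by rw [LinearMap.map_smulₛₗ, hx]
    · exact Finset.sum_congr rfl fun t _ => by rw [LinearMap.map_smulₛₗ]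
  -- real expansion of each x k
  have hXexp : ∀ k : Fin q, ∃ cr : Fin r → ℝ, (∀ s, |cr s| ≤ ζ⁻¹) ∧
      x k = ∑ s, ((cr s : ℂ)) • x (K₀ s) := by
    intro k
    obtain ⟨c, hc⟩ := hmemT (x k) (hxL k)
    have hsp : ∑ s, c (Fin.castAdd n s) • x (K₀ s) +
        ∑ t, c (Fin.natAdd r t) • l (J₀ t) = x k := by
      rw [← hc, sum_split2]
      congr 1
      · exact Finset.sum_congr rfl fun s _ => by rw [hT1]
      · exact Finset.sum_congr rfl fun t _ => by rw [hT2]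
    have hσxk : ∑ s, (starRingEnd ℂ (c (Fin.castAdd n s))) • x (K₀ s) +
        ∑ t, (starRingEnd ℂ (c (Fin.natAdd r t))) • σ (l (J₀ t)) = x k := by
      have h2 := congrArg σ hsp
      rw [map_add, map_sum, map_sum, hx] at h2
      rw [← h2]
      congr 1
      · exact Finset.sum_congr rfl fun s _ => by rw [LinearMap.map_smulₛₗ, hx]
      · exact Finset.sum_congr rfl fun t _ => by rw [LinearMap.map_smulₛₗ]
    have h0 : ∑ s, (c (Fin.castAdd n s) - starRingEnd ℂ (c (Fin.castAdd n s))) • x (K₀ s) +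
        ∑ t, c (Fin.natAdd r t) • l (J₀ t) +
        ∑ t, (-(starRingEnd ℂ (c (Fin.natAdd r t)))) • σ (l (J₀ t)) = 0 := by
      simp only [sub_smul, neg_smul]
      rw [Finset.sum_sub_distrib, Finset.sum_neg_distrib]
      calc (∑ s, c (Fin.castAdd n s) • x (K₀ s) -
            ∑ s, (starRingEnd ℂ) (c (Fin.castAdd n s)) • x (K₀ s)) +
            ∑ t, c (Fin.natAdd r t) • l (J₀ t) +
            -∑ t, (starRingEnd ℂ) (c (Fin.natAdd r t)) • σ (l (J₀ t))
          = (∑ s, c (Fin.castAdd n s) • x (K₀ s) + ∑ t, c (Fin.natAdd r t) • l (J₀ t)) -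
            (∑ s, (starRingEnd ℂ) (c (Fin.castAdd n s)) • x (K₀ s) +
             ∑ t, (starRingEnd ℂ) (c (Fin.natAdd r t)) • σ (l (J₀ t))) := by abel
      _ = x k - x k := by rw [hsp, hσxk]
      _ = 0 := sub_self _
    obtain ⟨hre, h0t, _⟩ := hCind _ _ _ h0
    refine ⟨fun s => (c (Fin.castAdd n s)).re, fun s => ?_, ?_⟩
    · calc |(c (Fin.castAdd n s)).re| ≤ ‖c (Fin.castAdd n s)‖ :=
            Complex.abs_re_le_norm _
        _ = ‖c (Fin.castAdd n s)‖ := rfl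
        _ ≤ ζ⁻¹ := hXcoef k c hc s
    · have hzero : ∑ t, c (Fin.natAdd r t) • l (J₀ t) = 0 :=
        Finset.sum_eq_zero fun t _ => by rw [h0t t, zero_smul]
      rw [← hsp, hzero, add_zero]
      refine Finset.sum_congr rfl fun s _ => ?_
      congr 1
      have := hre s
      rw [sub_eq_zero] at this
      exact (Complex.conj_eq_iff_re.mp this.symm).symm
  -- bounded expansion of each l j
  have hLexp : ∀ j : Fin m, ∃ a : Fin r → ℂ, ∃ bb : Fin n → ℂ,
      (∀ s, ‖a s‖ ≤ ζ⁻¹) ∧ (∀ t, ‖bb t‖ ≤ ζ⁻¹) ∧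
      l j = ∑ s, a s • x (K₀ s) + ∑ t, bb t • l (J₀ t) := by
    intro j
    obtain ⟨c, hc⟩ := hmemT (l j) (hlL j)
    refine ⟨fun s => c (Fin.castAdd n s), fun t => c (Fin.natAdd r t),
      fun s => hAcoef j c hc s, fun t => hJcoef j c hc t, ?_⟩
    rw [← hc, sum_split2]
    congr 1
    · exact Finset.sum_congr rfl fun s _ => by rw [hT1]
    · exact Finset.sum_congr rfl fun t _ => by rw [hT2]
  -- evaluations of B₀ and w
  have hB1 : ∀ s : Fin r, B₀ (Fin.castAdd n (Fin.castAdd n s)) = x (K₀ s) := fun s => by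
    rw [hB₀, Fin.append_left, Fin.append_left]; rfl
  have hB2 : ∀ t : Fin n, B₀ (Fin.castAdd n (Fin.natAdd r t)) =
      (2 : ℂ) • conjRe σ (l (J₀ t)) := fun t => by
    rw [hB₀, Fin.append_left, Fin.append_right]
  have hB3 : ∀ t : Fin n, B₀ (Fin.natAdd (r + n) t) =
      (2 : ℂ) • conjIm σ (l (J₀ t)) := fun t => by
    rw [hB₀, Fin.append_right]
  have hw1 : ∀ k : Fin q, w (Fin.castAdd m (Fin.castAdd m k)) = x k := fun k => by
    rw [hw, Fin.append_left, Fin.append_left]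
  have hw2 : ∀ j : Fin m, w (Fin.castAdd m (Fin.natAdd q j)) =
      (2 : ℂ) • conjRe σ (l j) := fun j => by
    rw [hw, Fin.append_left, Fin.append_right]
  have hw3 : ∀ j : Fin m, w (Fin.natAdd (q + m) j) =
      (2 : ℂ) • conjIm σ (l j) := fun j => by
    rw [hw, Fin.append_right]
  -- Part 1: real linear independence of B₀
  have hBli : LinearIndependent ℝ B₀ := by
    rw [Fintype.linearIndependent_iff]
    intro g hg
    rw [sum_split3] at hg
    simp only [hB1, hB2, hB3, two_conjRe, two_conjIm, real_smul_eq] at hg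
    have hg' : ∑ s, ((g (Fin.castAdd n (Fin.castAdd n s)) : ℝ) : ℂ) • x (K₀ s) +
        ∑ t, (((g (Fin.castAdd n (Fin.natAdd r t)) : ℝ) : ℂ) +
          ((g (Fin.natAdd (r + n) t) : ℝ) : ℂ) * (-Complex.I)) • l (J₀ t) +
        ∑ t, (((g (Fin.castAdd n (Fin.natAdd r t)) : ℝ) : ℂ) -
          ((g (Fin.natAdd (r + n) t) : ℝ) : ℂ) * (-Complex.I)) • σ (l (J₀ t)) = 0 := by
      rw [← hg, add_assoc, add_assoc]
      congr 1
      rw [← Finset.sum_add_distrib, ← Finset.sum_add_distrib]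
      refine Finset.sum_congr rfl fun t _ => ?_
      rw [combineRI]
    obtain ⟨h1, h2, _⟩ := hCind _ _ _ hg'
    intro p
    induction p using Fin.addCases with
    | left i =>
      induction i using Fin.addCases with
      | left s => exact_mod_cast h1 s
      | right t =>
        have h2t := h2 t
        simp only [Complex.ext_iff, Complex.add_re, Complex.add_im, Complex.ofReal_re,
          Complex.ofReal_im, Complex.mul_re, Complex.mul_im, Complex.neg_re, Complex.neg_im,
          Complex.I_re, Complex.I_im, Complex.zero_re, Complex.zero_im] at h2t
        rcases h2t with ⟨h2a, h2b⟩
        linarith [h2a, h2b]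
    | right t =>
      have h2t := h2 t
      simp only [Complex.ext_iff, Complex.add_re, Complex.add_im, Complex.ofReal_re,
        Complex.ofReal_im, Complex.mul_re, Complex.mul_im, Complex.neg_re, Complex.neg_im,
        Complex.I_re, Complex.I_im, Complex.zero_re, Complex.zero_im] at h2t
      rcases h2t with ⟨h2a, h2b⟩
      linarith [h2a, h2b]
  -- bounded real rows for each w i
  have hRow : ∀ i : Fin (q + m + m), ∃ g : Fin (r + n + n) → ℝ,
      (∀ p, |g p| ≤ 2 * ζ⁻¹) ∧ w i = ∑ p, g p • B₀ p := by
    intro i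
    induction i using Fin.addCases with
    | left i' =>
      induction i' using Fin.addCases with
      | left k =>
        obtain ⟨cr, hcr, hk⟩ := hXexp k
        refine ⟨Fin.addCases (Fin.addCases cr (fun _ => 0)) (fun _ => 0), ?_, ?_⟩
        · intro p
          induction p using Fin.addCases with
          | left i'' =>
            induction i'' using Fin.addCases with
            | left s =>
              simp only [Fin.addCases_left]
              exact (hcr s).trans hζle
            | right t =>
              simp only [Fin.addCases_left, Fin.addCases_right]
              simpa using by positivity
          | right t =>
            simp only [Fin.addCases_right]
            simpa using by positivity
        · rw [hw1, sum_split3]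
          simp only [Fin.addCases_left, Fin.addCases_right, zero_smul, Finset.sum_const_zero,
            add_zero]
          rw [hk]
          exact Finset.sum_congr rfl fun s _ => by rw [hB1, real_smul_eq]
      | right j =>
        obtain ⟨a, bb, hja, hjb, heq⟩ := hLexp j
        refine ⟨Fin.addCases (Fin.addCases (fun s => 2 * (a s).re) (fun t => (bb t).re))
          (fun t => -(bb t).im), ?_, ?_⟩
        · intro p
          induction p using Fin.addCases with
          | left i'' =>
            induction i'' using Fin.addCases with
            | left s =>
              simp only [Fin.addCases_left]
              rw [abs_mul, abs_two]
              have : |(a s).re| ≤ ζ⁻¹ :=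
                le_trans (Complex.abs_re_le_norm _)
                  (le_trans (le_of_eq rfl) (hja s))
              linarith
            | right t =>
              simp only [Fin.addCases_left, Fin.addCases_right]
              refine le_trans ?_ hζle
              exact le_trans (Complex.abs_re_le_norm _)
                (le_trans (le_of_eq rfl) (hjb t))
          | right t =>
            simp only [Fin.addCases_right]
            rw [abs_neg]
            refine le_trans ?_ hζle
            exact le_trans (Complex.abs_im_le_norm _)
              (le_trans (le_of_eq rfl) (hjb t))
        · rw [hw2, sum_split3]
          simp only [Fin.addCases_left, Fin.addCases_right, hB1, hB2, hB3]
          rw [two_conjRe σ (l j), hσl j a bb heq, heq]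
          simp only [real_smul_eq, two_conjRe, two_conjIm]
          calc (∑ s, a s • x (K₀ s) + ∑ t, bb t • l (J₀ t)) +
              (∑ s, (starRingEnd ℂ (a s)) • x (K₀ s) +
               ∑ t, (starRingEnd ℂ (bb t)) • σ (l (J₀ t)))
              = ∑ s, (a s • x (K₀ s) + (starRingEnd ℂ (a s)) • x (K₀ s)) +
                ∑ t, (bb t • l (J₀ t) + (starRingEnd ℂ (bb t)) • σ (l (J₀ t))) := by
                  rw [Finset.sum_add_distrib, Finset.sum_add_distrib]; abel
            _ = ∑ s, ((2 * (a s).re : ℝ) : ℂ) • x (K₀ s) +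
                ∑ t, ((((bb t).re : ℝ) : ℂ) • (l (J₀ t) + σ (l (J₀ t))) +
                  (((-(bb t).im : ℝ) : ℂ)) • ((-Complex.I) • (l (J₀ t) - σ (l (J₀ t))))) := by
              congr 1
              · exact Finset.sum_congr rfl fun s _ => termX _ _
              · exact Finset.sum_congr rfl fun t _ => termRe _ _ _
            _ = ∑ s, ((2 * (a s).re : ℝ) : ℂ) • x (K₀ s) +
                ∑ t, (((bb t).re : ℝ) : ℂ) • (l (J₀ t) + σ (l (J₀ t))) +
                ∑ t, (((-(bb t).im : ℝ) : ℂ)) • ((-Complex.I) • (l (J₀ t) - σ (l (J₀ t)))) := by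
              rw [Finset.sum_add_distrib, add_assoc]
    | right j =>
      obtain ⟨a, bb, hja, hjb, heq⟩ := hLexp j
      refine ⟨Fin.addCases (Fin.addCases (fun s => 2 * (a s).im) (fun t => (bb t).im))
        (fun t => (bb t).re), ?_, ?_⟩
      · intro p
        induction p using Fin.addCases with
        | left i'' =>
          induction i'' using Fin.addCases with
          | left s =>
            simp only [Fin.addCases_left]
            rw [abs_mul, abs_two]
            have : |(a s).im| ≤ ζ⁻¹ :=
              le_trans (Complex.abs_im_le_norm _)
                (le_trans (le_of_eq rfl) (hja s))
            linarith
          | right t =>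
            simp only [Fin.addCases_left, Fin.addCases_right]
            refine le_trans ?_ hζle
            exact le_trans (Complex.abs_im_le_norm _)
              (le_trans (le_of_eq rfl) (hjb t))
        | right t =>
          simp only [Fin.addCases_right]
          refine le_trans ?_ hζle
          exact le_trans (Complex.abs_re_le_norm _)
            (le_trans (le_of_eq rfl) (hjb t))
      · rw [hw3, sum_split3]
        simp only [Fin.addCases_left, Fin.addCases_right, hB1, hB2, hB3]
        rw [two_conjIm σ (l j), hσl j a bb heq, heq]
        simp only [real_smul_eq, two_conjRe, two_conjIm]
        calc (-Complex.I) • ((∑ s, a s • x (K₀ s) + ∑ t, bb t • l (J₀ t)) -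
              (∑ s, (starRingEnd ℂ (a s)) • x (K₀ s) +
               ∑ t, (starRingEnd ℂ (bb t)) • σ (l (J₀ t))))
            = (-Complex.I) • (∑ s, (a s • x (K₀ s) - (starRingEnd ℂ (a s)) • x (K₀ s)) +
              ∑ t, (bb t • l (J₀ t) - (starRingEnd ℂ (bb t)) • σ (l (J₀ t)))) := by
                rw [Finset.sum_sub_distrib, Finset.sum_sub_distrib]; abel_nf
          _ = ∑ s, (-Complex.I) • (a s • x (K₀ s) - (starRingEnd ℂ (a s)) • x (K₀ s)) +
              ∑ t, (-Complex.I) • (bb t • l (J₀ t) - (starRingEnd ℂ (bb t)) • σ (l (J₀ t))) := by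
            rw [smul_add, Finset.smul_sum, Finset.smul_sum]
          _ = ∑ s, ((2 * (a s).im : ℝ) : ℂ) • x (K₀ s) +
              ∑ t, ((((bb t).im : ℝ) : ℂ) • (l (J₀ t) + σ (l (J₀ t))) +
                (((bb t).re : ℝ) : ℂ) • ((-Complex.I) • (l (J₀ t) - σ (l (J₀ t))))) := by
            congr 1
            · exact Finset.sum_congr rfl fun s _ => termXIm _ _
            · exact Finset.sum_congr rfl fun t _ => termIm _ _ _
          _ = ∑ s, ((2 * (a s).im : ℝ) : ℂ) • x (K₀ s) +
              ∑ t, (((bb t).im : ℝ) : ℂ) • (l (J₀ t) + σ (l (J₀ t))) +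
              ∑ t, (((bb t).re : ℝ) : ℂ) • ((-Complex.I) • (l (J₀ t) - σ (l (J₀ t)))) := by
            rw [Finset.sum_add_distrib, add_assoc]
  -- Part 2
  refine ⟨hBli, ?_⟩
  intro P ψ
  set S : Submodule ℝ W := span ℝ (Set.range B₀) with hS
  have hmemS : ∀ i, w i ∈ S := by
    intro i
    obtain ⟨g, _, hgeq⟩ := hRow i
    rw [hgeq]
    exact sum_mem fun p _ => smul_mem _ _ (subset_span ⟨p, rfl⟩)
  set bS : Module.Basis (Fin (r + n + n)) ℝ S := Module.Basis.span hBli with hbS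
  set vs : Fin (r + n + n) → S := fun i => ⟨w (P i), hmemS (P i)⟩ with hvs
  set ψS : S [⋀^Fin (r + n + n)]→ₗ[ℝ] ℝ := ψ.compLinearMap S.subtype with hψS
  have h1 : ψ (w ∘ P) = ψS vs := rfl
  have h3 : ψS ⇑bS = ψ B₀ := by
    show ψ (⇑S.subtype ∘ ⇑bS) = ψ B₀
    congr 1
    funext i
    exact congrArg Subtype.val (Module.Basis.span_apply hBli i)
  have h2 : ψS vs = ψ B₀ * (bS.toMatrix vs).det := by
    conv_lhs => rw [AlternatingMap.eq_smul_basis_det bS ψS]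
    rw [AlternatingMap.smul_apply, h3, Module.Basis.det_apply, smul_eq_mul]
  have hM : ∀ p i, |bS.toMatrix vs p i| ≤ 2 * ζ⁻¹ := by
    intro p i
    obtain ⟨g, hgb, hgeq⟩ := hRow (P i)
    have hvi : vs i = ∑ p', g p' • bS p' := by
      apply Subtype.coe_injective
      show ((vs i : S) : W) = ((∑ p', g p' • bS p' : S) : W)
      have hco : ((∑ p', g p' • bS p' : S) : W) = ∑ p', g p' • (bS p' : W) := by
        push_cast
        rfl
      rw [hco]
      show w (P i) = _
      rw [hgeq]
      refine Finset.sum_congr rfl fun p' _ => ?_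
      rw [hbS, Module.Basis.span_apply]
    rw [Module.Basis.toMatrix_apply, hvi, Module.Basis.repr_sum_self]
    exact hgb p
  have hdetb : |(bS.toMatrix vs).det| ≤
      (Real.sqrt ((r + n + n : ℕ) : ℝ) * (2 * ζ⁻¹)) ^ (r + n + n) :=
    my_hadamard _ _ (by positivity) hM
  calc |ψ (w ∘ P)| = |(bS.toMatrix vs).det| * |ψ B₀| := by
        rw [h1, h2, abs_mul, mul_comm]
    _ ≤ (Real.sqrt ((r + n + n : ℕ) : ℝ) * (2 * ζ⁻¹)) ^ (r + n + n) * |ψ B₀| :=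
        mul_le_mul_of_nonneg_right hdetb (abs_nonneg _)
    _ = (2 * ζ⁻¹ * Real.sqrt ((r + n + n : ℕ) : ℝ)) ^ (r + n + n) * |ψ B₀| := by
        rw [mul_comm (Real.sqrt _)]
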